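/- arXiv:2006.08801 — 7 statements merged into one kernel-verified Lean document; each statement's English description precedes it below -/
import Mathlib

section
/- With p_m(z) the characteristic polynomial of the 2m×2m block Toeplitz matrix T_m as above (and p_0(z) := 1), the sequence satisfies the three-term recurrence p_{m+1}(z) = (z^2 - b^2 + a^2) p_m(z) - a^2 z^2 p_{m-1}(z) for all m ≥ 1. -/
/-- The 2m×2m block tridiagonal Toeplitz matrix with diagonal blocks
`A₀ = [[0,b],[b,0]]`, superdiagonal blocks `A₁ = [[a,0],[0,0]]` and
subdiagonal blocks `A₋₁ = [[0,0],[0,a]]`. -/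
def blockToeplitz (m : ℕ) (a b : ℂ) : Matrix (Fin (2 * m)) (Fin (2 * m)) ℂ :=
  Matrix.of fun i j =>
    if i.val / 2 = j.val / 2 ∧ i.val ≠ j.val then b
    else if j.val = i.val + 2 ∧ i.val % 2 = 0 then a
    else if i.val = j.val + 2 ∧ i.val % 2 = 1 then a
    else 0

/-- Characteristic polynomial of the block Toeplitz matrix (note the `0 × 0`
matrix has characteristic polynomial `1`, giving `p 0 = 1`). -/
noncomputable def pChar (m : ℕ) (a b z : ℂ) : ℂ :=
  (blockToeplitz m a b).charpoly.eval z

namespace BTaux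

/-- entries of `z • 1 - T`. -/
def ent (a b z : ℂ) (i j : ℕ) : ℂ :=
  (if i = j then z else 0) -
    (if i / 2 = j / 2 ∧ i ≠ j then b
     else if j = i + 2 ∧ i % 2 = 0 then a
     else if i = j + 2 ∧ i % 2 = 1 then a
     else 0)

def PM (a b z : ℂ) (n : ℕ) : Matrix (Fin n) (Fin n) ℂ :=
  Matrix.of fun i j => ent a b z i.val j.val

def QM (a b z : ℂ) (k : ℕ) : Matrix (Fin (2 * k + 1)) (Fin (2 * k + 1)) ℂ :=
  Matrix.of fun i j => ent a b z (if i.val < 2 * k then i.val else 2 * k + 1) j.val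

def GM (a b z : ℂ) (k : ℕ) : Matrix (Fin (2 * k + 1 + 1)) (Fin (2 * k + 1 + 1)) ℂ :=
  Matrix.of fun i j => ent a b z i.val (if j.val < 2 * k + 1 then j.val else 2 * k + 2)

variable (a b z : ℂ)

lemma ent_diag (n : ℕ) : ent a b z n n = z := by
  unfold ent
  rw [if_pos rfl, if_neg (by omega), if_neg (by omega), if_neg (by omega), sub_zero]

lemma ent_zero {i j : ℕ} (hne : i ≠ j) (hpair : i / 2 ≠ j / 2)
    (h2 : ¬(j = i + 2 ∧ i % 2 = 0)) (h3 : ¬(i = j + 2 ∧ i % 2 = 1)) :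
    ent a b z i j = 0 := by
  unfold ent
  rw [if_neg hne, if_neg (by tauto), if_neg h2, if_neg h3, sub_zero]

lemma ent_b {i j : ℕ} (h : i / 2 = j / 2) (hne : i ≠ j) : ent a b z i j = -b := by
  unfold ent
  rw [if_neg hne, if_pos ⟨h, hne⟩, zero_sub]

lemma ent_a2 {i j : ℕ} (h : j = i + 2) (he : i % 2 = 0) : ent a b z i j = -a := by
  unfold ent
  rw [if_neg (by omega), if_neg (by omega), if_pos ⟨h, he⟩, zero_sub]

lemma ent_a3 {i j : ℕ} (h : i = j + 2) (he : i % 2 = 1) : ent a b z i j = -a := by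
  unfold ent
  rw [if_neg (by omega), if_neg (by omega), if_neg (by omega), if_pos ⟨h, he⟩, zero_sub]

lemma succAbove_val {n : ℕ} (p : Fin (n + 1)) (i : Fin n) :
    (p.succAbove i).val = if i.val < p.val then i.val else i.val + 1 := by
  rw [Fin.succAbove]
  split_ifs with h1 h2 h2 <;>
    simp_all [Fin.lt_def, Fin.val_succ, Fin.coe_castSucc]

lemma succAbove_mk_val {n : ℕ} (v : ℕ) (hv : v < n + 1) (i : Fin n) :
    (((⟨v, hv⟩ : Fin (n + 1))).succAbove i).val
      = if i.val < v then i.val else i.val + 1 :=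
  succAbove_val _ _

lemma pChar_eq (m : ℕ) : pChar m a b z = (PM a b z (2 * m)).det := by
  unfold pChar Matrix.charpoly
  rw [show Polynomial.eval z ((blockToeplitz m a b).charmatrix.det)
      = ((blockToeplitz m a b).charmatrix.map (Polynomial.evalRingHom z)).det from
    RingHom.map_det (Polynomial.evalRingHom z) _]
  congr 1
  ext i j
  by_cases h : i = j
  · subst h
    simp only [Matrix.map_apply, Matrix.charmatrix_apply_eq, Polynomial.coe_evalRingHom,
      Polynomial.eval_sub, Polynomial.eval_X, Polynomial.eval_C, PM, Matrix.of_apply]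
    unfold ent
    rw [if_pos rfl]
    congr 1
  · have hv : i.val ≠ j.val := fun hv => h (Fin.ext hv)
    simp only [Matrix.map_apply, Matrix.charmatrix_apply_ne _ _ _ h, Polynomial.coe_evalRingHom,
      Polynomial.eval_neg, Polynomial.eval_C, PM, Matrix.of_apply]
    unfold ent
    rw [if_neg hv, zero_sub]
    congr 1

lemma detQ0 : (QM a b z 0).det = -b := by
  rw [show (QM a b z 0).det = QM a b z 0 0 0 from Matrix.det_fin_one _]
  show ent a b z (if (0:ℕ) < 0 then 0 else 1) 0 = -b
  rw [if_neg (by omega)]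
  exact ent_b a b z (by norm_num) (by norm_num)

/-- The minor `PM (2m+1)` expands along its last row. -/
lemma detA (m : ℕ) : (PM a b z (2 * m + 1)).det = z * (PM a b z (2 * m)).det := by
  rw [Matrix.det_succ_row (PM a b z (2 * m + 1)) (Fin.last (2 * m))]
  rw [Finset.sum_eq_single_of_mem (Fin.last (2 * m)) (Finset.mem_univ _)]
  · have e1 : (PM a b z (2 * m + 1)) (Fin.last (2 * m)) (Fin.last (2 * m)) = z :=
      ent_diag a b z (2 * m)
    have e2 : ((PM a b z (2 * m + 1)).submatrix (Fin.last (2 * m)).succAbove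
        (Fin.last (2 * m)).succAbove) = PM a b z (2 * m) := by
      ext i j
      simp only [Matrix.submatrix_apply, PM, Matrix.of_apply]
      congr 1 <;> rw [succAbove_val] <;>
        simp [Fin.val_last, i.isLt, j.isLt]
    rw [e1, e2]
    have : (-1 : ℂ) ^ ((Fin.last (2*m) : ℕ) + (Fin.last (2*m) : ℕ)) = 1 :=
      Even.neg_one_pow ⟨(2*m : ℕ), rfl⟩
    rw [this, one_mul]
  · intro j _ hj
    have hjv : j.val ≠ 2 * m := fun h => hj (Fin.ext (by simp [Fin.val_last, h]))
    have hlt : j.val < 2 * m + 1 := j.isLt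
    have : (PM a b z (2 * m + 1)) (Fin.last (2 * m)) j = 0 := by
      apply ent_zero <;> simp [Fin.val_last] <;> omega
    rw [this, mul_zero, zero_mul]

lemma step1 (m : ℕ) :
    (PM a b z (2 * m + 1 + 1)).det
      = z ^ 2 * (PM a b z (2 * m)).det + b * (QM a b z m).det := by
  rw [Matrix.det_succ_column (PM a b z (2 * m + 1 + 1)) (Fin.last (2 * m + 1))]
  have hne : (⟨2 * m, by omega⟩ : Fin (2 * m + 1 + 1)) ≠ Fin.last (2 * m + 1) := by
    intro h
    have := congrArg Fin.val h
    simp [Fin.val_last] at this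
  rw [← Finset.sum_subset (Finset.subset_univ
      ({(⟨2 * m, by omega⟩ : Fin (2 * m + 1 + 1)), Fin.last (2 * m + 1)} : Finset _)) ?_]
  · rw [Finset.sum_pair hne]
    -- term at i = 2m
    have eA : (PM a b z (2 * m + 1 + 1)) ⟨2 * m, by omega⟩ (Fin.last (2 * m + 1)) = -b :=
      ent_b a b z (by simp [Fin.val_last]; omega) (by simp [Fin.val_last])
    have eMinorQ : ((PM a b z (2 * m + 1 + 1)).submatrix
        (⟨2 * m, by omega⟩ : Fin (2 * m + 1 + 1)).succAbove
        (Fin.last (2 * m + 1)).succAbove) = QM a b z m := by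
      ext i j
      simp only [Matrix.submatrix_apply, PM, QM, Matrix.of_apply]
      congr 1
      · rw [succAbove_mk_val]
        have := i.isLt
        split_ifs <;> omega
      · rw [succAbove_val]
        simp [Fin.val_last, j.isLt]
    have sA : (-1 : ℂ) ^ ((2 * m : ℕ) + ((Fin.last (2 * m + 1) : Fin (2*m+1+1)) : ℕ)) = -1 := by
      rw [Fin.val_last]
      exact Odd.neg_one_pow ⟨2 * m, by ring⟩
    -- term at i = last
    have eZ : (PM a b z (2 * m + 1 + 1)) (Fin.last (2 * m + 1)) (Fin.last (2 * m + 1)) = z :=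
      ent_diag a b z (2 * m + 1)
    have eMinorA : ((PM a b z (2 * m + 1 + 1)).submatrix
        (Fin.last (2 * m + 1)).succAbove (Fin.last (2 * m + 1)).succAbove)
        = PM a b z (2 * m + 1) := by
      ext i j
      simp only [Matrix.submatrix_apply, PM, Matrix.of_apply]
      congr 1 <;> rw [succAbove_val] <;> simp [Fin.val_last, i.isLt, j.isLt]
    have sZ : (-1 : ℂ) ^ (((Fin.last (2 * m + 1) : Fin (2*m+1+1)) : ℕ)
        + ((Fin.last (2 * m + 1) : Fin (2*m+1+1)) : ℕ)) = 1 :=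
      Even.neg_one_pow ⟨_, rfl⟩
    rw [show ((⟨2 * m, by omega⟩ : Fin (2 * m + 1 + 1)) : ℕ) = 2 * m from rfl] at *
    rw [eA, eMinorQ, sA, eZ, eMinorA, sZ, detA]
    ring
  · intro i _ hi
    have h1 : i.val ≠ 2 * m := by
      intro h
      exact hi (by simp [Finset.mem_insert, Fin.ext_iff, h])
    have h2 : i.val ≠ 2 * m + 1 := by
      intro h; apply hi
      simp [Fin.ext_iff, Fin.val_last, h]
    have : (PM a b z (2 * m + 1 + 1)) i (Fin.last (2 * m + 1)) = 0 := by
      apply ent_zero <;> simp [Fin.val_last] <;> omega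
    rw [this, mul_zero, zero_mul]

lemma detG (k : ℕ) : (GM a b z k).det = a * (QM a b z k).det := by
  rw [Matrix.det_succ_column (GM a b z k) (Fin.last (2 * k + 1))]
  rw [Finset.sum_eq_single_of_mem (⟨2 * k, by omega⟩ : Fin (2 * k + 1 + 1))
      (Finset.mem_univ _)]
  · have eE : (GM a b z k) ⟨2 * k, by omega⟩ (Fin.last (2 * k + 1)) = -a := by
      show ent a b z (2 * k) (if (Fin.last (2*k+1)).val < 2 * k + 1 then _ else 2 * k + 2) = -a
      rw [if_neg (by simp [Fin.val_last])]
      exact ent_a2 a b z rfl (by omega)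
    have eMinor : ((GM a b z k).submatrix
        (⟨2 * k, by omega⟩ : Fin (2 * k + 1 + 1)).succAbove
        (Fin.last (2 * k + 1)).succAbove) = QM a b z k := by
      ext i j
      simp only [Matrix.submatrix_apply, GM, QM, Matrix.of_apply]
      have hj : ((Fin.last (2*k+1)).succAbove j).val = j.val := by
        rw [succAbove_val]; simp [Fin.val_last, j.isLt]
      rw [hj, if_pos j.isLt]
      congr 1
      rw [succAbove_mk_val]
      have := i.isLt
      split_ifs <;> omega
    have sgn : (-1 : ℂ) ^ ((2 * k : ℕ) + ((Fin.last (2 * k + 1) : Fin (2*k+1+1)) : ℕ)) = -1 := by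
      rw [Fin.val_last]
      exact Odd.neg_one_pow ⟨2 * k, by ring⟩
    rw [show ((⟨2 * k, by omega⟩ : Fin (2 * k + 1 + 1)) : ℕ) = 2 * k from rfl] at *
    rw [eE, eMinor, sgn]
    ring
  · intro i _ hi
    have h1 : i.val ≠ 2 * k := fun h => hi (Fin.ext h)
    have hlt : i.val < 2 * k + 2 := i.isLt
    have : (GM a b z k) i (Fin.last (2 * k + 1)) = 0 := by
      show ent a b z i.val (if (Fin.last (2*k+1)).val < 2 * k + 1 then _ else 2 * k + 2) = 0
      rw [if_neg (by simp [Fin.val_last])]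
      apply ent_zero <;> omega
    rw [this, mul_zero, zero_mul]

lemma step2 (k : ℕ) :
    (QM a b z (k + 1)).det
      = a ^ 2 * (QM a b z k).det - b * (PM a b z (2 * k + 1 + 1)).det := by
  classical
  have hQ : (QM a b z (k + 1)).det = (QM a b z (k+1) : Matrix (Fin (2*k+2+1)) (Fin (2*k+2+1)) ℂ).det := rfl
  rw [hQ, Matrix.det_succ_row _ (Fin.last (2 * k + 2))]
  have hrowlast : ∀ j : Fin (2 * k + 2 + 1),
      (QM a b z (k+1) : Matrix (Fin (2*k+2+1)) (Fin (2*k+2+1)) ℂ) (Fin.last (2 * k + 2)) j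
        = ent a b z (2 * k + 3) j.val := by
    intro j
    show ent a b z (if (Fin.last (2*k+2)).val < 2 * (k+1) then _ else 2 * (k+1) + 1) j.val = _
    rw [if_neg (by simp [Fin.val_last]; omega)]
    ring_nf
  have hne : (⟨2 * k + 1, by omega⟩ : Fin (2 * k + 2 + 1)) ≠ Fin.last (2 * k + 2) := by
    intro h
    have := congrArg Fin.val h
    simp [Fin.val_last] at this
  rw [← Finset.sum_subset (Finset.subset_univ
      ({(⟨2 * k + 1, by omega⟩ : Fin (2 * k + 2 + 1)), Fin.last (2 * k + 2)} : Finset _)) ?_]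
  · rw [Finset.sum_pair hne]
    -- term at j = 2k+1 : gives a * det GM k
    have eA : (QM a b z (k+1) : Matrix (Fin (2*k+2+1)) (Fin (2*k+2+1)) ℂ)
        (Fin.last (2 * k + 2)) ⟨2 * k + 1, by omega⟩ = -a := by
      rw [hrowlast]
      exact ent_a3 a b z (by norm_num) (by omega)
    have eMinorG : ((QM a b z (k+1) : Matrix (Fin (2*k+2+1)) (Fin (2*k+2+1)) ℂ).submatrix
        (Fin.last (2 * k + 2)).succAbove
        (⟨2 * k + 1, by omega⟩ : Fin (2 * k + 2 + 1)).succAbove) = GM a b z k := by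
      ext i j
      simp only [Matrix.submatrix_apply, GM, Matrix.of_apply]
      have hi : ((Fin.last (2*k+2)).succAbove i).val = i.val := by
        rw [succAbove_val]; simp [Fin.val_last, i.isLt]
      show ent a b z (if ((Fin.last (2*k+2)).succAbove i).val < 2 * (k+1) then _ else _) _ = _
      rw [hi, if_pos (by omega)]
      congr 1
      rw [succAbove_val]
      show (if j.val < 2 * k + 1 then j.val else j.val + 1)
        = if j.val < 2 * k + 1 then j.val else 2 * k + 2
      have := j.isLt
      split_ifs <;> omega
    have sA : (-1 : ℂ) ^ (((Fin.last (2 * k + 2) : Fin (2*k+2+1)) : ℕ) + (2 * k + 1 : ℕ)) = -1 := by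
      rw [Fin.val_last]
      exact Odd.neg_one_pow ⟨2 * k + 1, by ring⟩
    -- term at j = last : gives -b * det PM (2k+2)
    have eB : (QM a b z (k+1) : Matrix (Fin (2*k+2+1)) (Fin (2*k+2+1)) ℂ)
        (Fin.last (2 * k + 2)) (Fin.last (2 * k + 2)) = -b := by
      rw [hrowlast]
      exact ent_b a b z (by simp [Fin.val_last]; omega) (by simp [Fin.val_last])
    have eMinorP : ((QM a b z (k+1) : Matrix (Fin (2*k+2+1)) (Fin (2*k+2+1)) ℂ).submatrix
        (Fin.last (2 * k + 2)).succAbove (Fin.last (2 * k + 2)).succAbove)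
        = PM a b z (2 * k + 1 + 1) := by
      ext i j
      simp only [Matrix.submatrix_apply, PM, Matrix.of_apply]
      have hi : ((Fin.last (2*k+2)).succAbove i).val = i.val := by
        rw [succAbove_val]; simp [Fin.val_last, i.isLt]
      have hj : ((Fin.last (2*k+2)).succAbove j).val = j.val := by
        rw [succAbove_val]; simp [Fin.val_last, j.isLt]
      show ent a b z (if ((Fin.last (2*k+2)).succAbove i).val < 2 * (k+1) then _ else _) _ = _
      rw [hi, hj, if_pos (by omega)]
    have sB : (-1 : ℂ) ^ (((Fin.last (2 * k + 2) : Fin (2*k+2+1)) : ℕ)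
        + ((Fin.last (2 * k + 2) : Fin (2*k+2+1)) : ℕ)) = 1 :=
      Even.neg_one_pow ⟨_, rfl⟩
    rw [show ((⟨2 * k + 1, by omega⟩ : Fin (2 * k + 2 + 1)) : ℕ) = 2 * k + 1 from rfl] at *
    rw [eA, eMinorG, sA, eB, eMinorP, sB, detG]
    ring
  · intro j _ hj
    have h1 : j.val ≠ 2 * k + 1 := by
      intro h
      exact hj (by simp [Finset.mem_insert, Fin.ext_iff, h])
    have h2 : j.val ≠ 2 * k + 2 := by
      intro h; apply hj; simp [Fin.ext_iff, Fin.val_last, h]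
    have hlt : j.val < 2 * k + 3 := j.isLt
    have : (QM a b z (k+1) : Matrix (Fin (2*k+2+1)) (Fin (2*k+2+1)) ℂ)
        (Fin.last (2 * k + 2)) j = 0 := by
      rw [hrowlast]
      apply ent_zero <;> omega
    rw [this, mul_zero, zero_mul]

end BTaux

theorem stmt_1 (a b : ℂ) (ha : a ≠ 0) (hb : b ≠ 0) (m : ℕ) (hm : 1 ≤ m) (z : ℂ) :
    pChar (m + 1) a b z =
      (z ^ 2 - b ^ 2 + a ^ 2) * pChar m a b z - a ^ 2 * z ^ 2 * pChar (m - 1) a b z := by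
  obtain ⟨n, rfl⟩ : ∃ n, m = n + 1 := ⟨m - 1, (Nat.succ_pred_eq_of_pos hm).symm⟩
  simp only [Nat.add_sub_cancel]
  rw [BTaux.pChar_eq, BTaux.pChar_eq, BTaux.pChar_eq]
  have h1 := BTaux.step1 a b z (n + 1)
  have h0 := BTaux.step1 a b z n
  have h2 := BTaux.step2 a b z n
  have e1 : (BTaux.PM a b z (2 * (n + 1 + 1))).det
      = (BTaux.PM a b z (2 * (n + 1) + 1 + 1)).det := rfl
  have e2 : (BTaux.PM a b z (2 * (n + 1))).det
      = (BTaux.PM a b z (2 * n + 1 + 1)).det := rfl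
  rw [e1, h1, h2, e2, h0]
  ring
end

section
/- Let f_m(q) = q^{2m+2} - c q^{2m+1} + 2(c-1) q^{m+1} - c q + 1 with |c| > 81/14 and m ≥ 2. Then f_m has exactly one root (counted with multiplicity) of absolute value less than 2^{-2/m}. -/
/-- the complex absolute value -/
noncomputable def Complex.abs : AbsoluteValue ℂ ℝ := NormedField.toAbsoluteValue ℂ

lemma Complex.abs_apply (z : ℂ) : Complex.abs z = ‖z‖ := rfl

lemma Complex.abs_natCast (n : ℕ) : Complex.abs (n : ℂ) = n := by
  rw [Complex.abs_apply, Complex.norm_natCast]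

@[simp]
lemma Complex.abs_two : Complex.abs 2 = 2 := by
  rw [Complex.abs_apply]; norm_num

/-- decreasing sequence (n+1)(7/20)^n -/
lemma stmt6_dec (j n : ℕ) (hjn : j ≤ n) :
    ((n : ℝ) + 1) * (7/20) ^ n ≤ ((j : ℝ) + 1) * (7/20) ^ j := by
  induction n, hjn using Nat.le_induction with
  | base => exact le_refl _
  | succ n hn ih =>
    refine le_trans ?_ ih
    have h : ((n:ℝ) + 1 + 1) * (7/20) ≤ (n:ℝ) + 1 := by
      have : (0:ℝ) ≤ (n:ℝ) := Nat.cast_nonneg n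
      nlinarith
    have step : (((n:ℝ) + 1 + 1) * (7/20)) * (7/20)^n ≤ ((n:ℝ) + 1) * (7/20)^n :=
      mul_le_mul_of_nonneg_right h (by positivity)
    calc (((n+1:ℕ):ℝ) + 1) * (7/20)^(n+1)
        = (((n:ℝ) + 1 + 1) * (7/20)) * (7/20)^n := by push_cast; ring
      _ ≤ ((n:ℝ) + 1) * (7/20)^n := step

/-- difference of powers bound -/
lemma stmt6_powd (k : ℕ) (a b : ℂ) (ha : Complex.abs a ≤ 7/20) (hb : Complex.abs b ≤ 7/20) :
    Complex.abs (a ^ (k+1) - b ^ (k+1)) ≤ ((k:ℝ) + 1) * (7/20) ^ k * Complex.abs (a - b) := by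
  induction k with
  | zero => simp [pow_one]
  | succ k ih =>
    have key : a ^ (k+2) - b ^ (k+2) = a ^ (k+1) * (a - b) + b * (a ^ (k+1) - b ^ (k+1)) := by ring
    have h1 : Complex.abs (a ^ (k+1) * (a - b)) ≤ (7/20)^(k+1) * Complex.abs (a - b) := by
      rw [map_mul]
      apply mul_le_mul_of_nonneg_right _ (AbsoluteValue.nonneg _ _)
      rw [map_pow]
      exact pow_le_pow_left₀ (AbsoluteValue.nonneg _ _) ha _
    have h2 : Complex.abs (b * (a ^ (k+1) - b ^ (k+1))) ≤
        (7/20) * (((k:ℝ) + 1) * (7/20) ^ k * Complex.abs (a - b)) := by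
      rw [map_mul]
      exact mul_le_mul hb ih (AbsoluteValue.nonneg _ _) (by norm_num)
    calc Complex.abs (a ^ (k+2) - b ^ (k+2))
        ≤ Complex.abs (a ^ (k+1) * (a - b)) + Complex.abs (b * (a ^ (k+1) - b ^ (k+1))) := by
          rw [key]; exact AbsoluteValue.add_le _ _ _
      _ ≤ (7/20)^(k+1) * Complex.abs (a - b)
            + (7/20) * (((k:ℝ) + 1) * (7/20) ^ k * Complex.abs (a - b)) := add_le_add h1 h2
      _ ≤ ((k:ℝ) + 1 + 1) * (7/20) ^ (k+1) * Complex.abs (a - b) := by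
          have := AbsoluteValue.nonneg Complex.abs (a - b)
          ring_nf
          nlinarith [pow_nonneg (by norm_num : (0:ℝ) ≤ 7/20) k]
      _ = _ := by push_cast; ring

/-- the central numeric estimate -/
lemma stmt6_combo (m : ℕ) (hm : 2 ≤ m) (C E : ℝ) (hC : 81/14 < C) (hE0 : 0 ≤ E) (hE : E ≤ C + 1) :
    (2*(m:ℝ)+2) * (7/20)^(2*m+1) + C * ((2*(m:ℝ)+1) * (7/20)^(2*m))
      + 2*E*(((m:ℝ)+1) * (7/20)^m) ≤ (19/20) * C := by
  have h1 : (2*(m:ℝ)+2) * (7/20)^(2*m+1) ≤ 6 * (7/20)^5 := by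
    have := stmt6_dec 5 (2*m+1) (by omega)
    push_cast at this ⊢
    linarith
  have h2 : (2*(m:ℝ)+1) * (7/20)^(2*m) ≤ 5 * (7/20)^4 := by
    have := stmt6_dec 4 (2*m) (by omega)
    push_cast at this ⊢
    linarith
  have h3 : ((m:ℝ)+1) * (7/20)^m ≤ 3 * (7/20)^2 := by
    have := stmt6_dec 2 m hm
    push_cast at this ⊢
    linarith
  have h2' : C * ((2*(m:ℝ)+1) * (7/20)^(2*m)) ≤ C * (5 * (7/20)^4) :=
    mul_le_mul_of_nonneg_left h2 (by linarith)
  have h3' : 2*E*(((m:ℝ)+1) * (7/20)^m) ≤ 2*(C+1)*(3 * (7/20)^2) := by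
    have hp : (0:ℝ) ≤ ((m:ℝ)+1) * (7/20)^m := by positivity
    nlinarith
  nlinarith

lemma stmt6_ann1 (C t : ℝ) (hC : 81/14 < C) (h1 : 7/20 < t) (h2 : t ≤ 1/2) :
    1 + 2*(C+1)*t^3 + C*t^5 + t^6 < C*t := by
  nlinarith [mul_nonneg (mul_nonneg (by linarith : (0:ℝ) ≤ 1/2 - t) (by linarith : (0:ℝ) ≤ t - 7/20)) (pow_nonneg (by linarith) 2),
    mul_pos (by linarith : (0:ℝ) < C - 81/14) (by nlinarith [sq_nonneg t, pow_le_pow_of_le_one (by linarith : (0:ℝ) ≤ t) (by linarith : t ≤ 1) (by norm_num : 3 ≤ 5), mul_le_mul_of_nonneg_left (mul_le_mul h2 h2 (by linarith) (by norm_num) : t*t ≤ (1/2)*(1/2)) (by linarith : (0:ℝ) ≤ t)] : (0:ℝ) < t - 2*t^3 - t^5),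
    mul_nonneg (by linarith : (0:ℝ) ≤ 1/2 - t) (pow_nonneg (by linarith) 3),
    mul_nonneg (by linarith : (0:ℝ) ≤ 1/2 - t) (pow_nonneg (by linarith) 4),
    sq_nonneg t, sq_nonneg (t - 1/2), mul_nonneg (by linarith : (0:ℝ) ≤ t - 7/20) (sq_nonneg t)]

lemma stmt6_ann2 (C t : ℝ) (hC : 81/14 < C) (h1 : 1/2 < t) (h2 : t < 1) :
    1 + (C+1)*t/2 + C*t/16 + t^2/16 < C*t := by
  nlinarith [mul_pos (by linarith : (0:ℝ) < t - 1/2) (by linarith : (0:ℝ) < 32 - t),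
    mul_pos (by linarith : (0:ℝ) < C - 81/14) (by linarith : (0:ℝ) < t)]

lemma stmt6_abs3 (A B D : ℂ) : Complex.abs (A - B + D)
    ≤ Complex.abs A + Complex.abs B + Complex.abs D := by
  calc Complex.abs (A - B + D) ≤ Complex.abs (A - B) + Complex.abs D := Complex.abs.add_le _ _
    _ ≤ Complex.abs A + Complex.abs B + Complex.abs D := by
        have := Complex.abs.sub_le_add A B
        linarith

lemma stmt6_abs4 (A B D : ℂ) : Complex.abs (A - B + D + 1)
    ≤ Complex.abs A + Complex.abs B + Complex.abs D + 1 := by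
  calc Complex.abs (A - B + D + 1) ≤ Complex.abs (A - B + D) + Complex.abs 1 :=
        Complex.abs.add_le _ _
    _ ≤ Complex.abs A + Complex.abs B + Complex.abs D + 1 := by
        have := stmt6_abs3 A B D
        simp at *; linarith

lemma stmt6_master (m : ℕ) (hm : 2 ≤ m) (c : ℂ) (hc : 81/14 < Complex.abs c)
    (A B D : ℂ) (d : ℝ) (hd : 0 ≤ d)
    (hA : Complex.abs A ≤ (2*(m:ℝ)+2)*(7/20)^(2*m+1) * d)
    (hB : Complex.abs B ≤ (2*(m:ℝ)+1)*(7/20)^(2*m) * d)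
    (hD : Complex.abs D ≤ ((m:ℝ)+1)*(7/20)^m * d) :
    Complex.abs (A - c*B + 2*(c-1)*D) ≤ (19/20) * Complex.abs c * d := by
  set C := Complex.abs c with hC
  have hC0 : (0:ℝ) < C := lt_trans (by norm_num) hc
  have hc1 : Complex.abs (c - 1) ≤ C + 1 := by
    have := Complex.abs.sub_le_add c 1
    simpa using this
  have habs1 : (0:ℝ) ≤ Complex.abs (c-1) := Complex.abs.nonneg _
  have hcombo := stmt6_combo m hm C (Complex.abs (c-1)) hc habs1 hc1
  have htri : Complex.abs (A - c*B + 2*(c-1)*D)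
      ≤ Complex.abs A + C * Complex.abs B + 2 * Complex.abs (c-1) * Complex.abs D := by
    have h := stmt6_abs3 A (c*B) (2*(c-1)*D)
    simp only [map_mul] at h
    calc Complex.abs (A - c*B + 2*(c-1)*D)
        ≤ Complex.abs A + Complex.abs c * Complex.abs B
            + Complex.abs 2 * Complex.abs (c-1) * Complex.abs D := h
      _ = Complex.abs A + C * Complex.abs B + 2 * Complex.abs (c-1) * Complex.abs D := by
          simp [hC]
  have hB' : C * Complex.abs B ≤ C * ((2*(m:ℝ)+1)*(7/20)^(2*m) * d) :=
    mul_le_mul_of_nonneg_left hB (le_of_lt hC0)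
  have hD' : 2 * Complex.abs (c-1) * Complex.abs D
      ≤ 2 * Complex.abs (c-1) * (((m:ℝ)+1)*(7/20)^m * d) := by
    apply mul_le_mul_of_nonneg_left hD (by linarith)
  have hfin : (2*(m:ℝ)+2)*(7/20)^(2*m+1) * d + C * ((2*(m:ℝ)+1)*(7/20)^(2*m) * d)
      + 2 * Complex.abs (c-1) * (((m:ℝ)+1)*(7/20)^m * d) ≤ (19/20) * C * d := by
    have := mul_le_mul_of_nonneg_right hcombo hd
    ring_nf at this ⊢
    linarith
  linarith

lemma stmt6_diffbound (m : ℕ) (hm : 2 ≤ m) (c : ℂ) (hc : 81/14 < Complex.abs c)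
    (a b : ℂ) (ha : Complex.abs a ≤ 7/20) (hb : Complex.abs b ≤ 7/20) :
    Complex.abs ((a^(2*m+2)-b^(2*m+2)) - c*(a^(2*m+1)-b^(2*m+1)) + 2*(c-1)*(a^(m+1)-b^(m+1)))
      ≤ (19/20) * Complex.abs c * Complex.abs (a - b) := by
  have hd : (0:ℝ) ≤ Complex.abs (a - b) := Complex.abs.nonneg _
  have hA : Complex.abs (a^(2*m+2) - b^(2*m+2))
      ≤ (2*(m:ℝ)+2)*(7/20)^(2*m+1) * Complex.abs (a-b) := by
    have h := stmt6_powd (2*m+1) a b ha hb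
    rw [show 2*m+1+1 = 2*m+2 from by omega] at h
    push_cast at h
    nlinarith [h]
  have hB : Complex.abs (a^(2*m+1) - b^(2*m+1))
      ≤ (2*(m:ℝ)+1)*(7/20)^(2*m) * Complex.abs (a-b) := by
    have h := stmt6_powd (2*m) a b ha hb
    rw [show 2*m+1 = 2*m+1 from rfl] at h
    push_cast at h
    nlinarith [h]
  have hD : Complex.abs (a^(m+1) - b^(m+1))
      ≤ ((m:ℝ)+1)*(7/20)^m * Complex.abs (a-b) := by
    have h := stmt6_powd m a b ha hb
    push_cast at h
    nlinarith [h]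
  exact stmt6_master m hm c hc _ _ _ _ hd hA hB hD

lemma stmt6_exists (m : ℕ) (hm : 2 ≤ m) (c : ℂ) (hc : 81/14 < Complex.abs c) :
  ∃ z : ℂ, (z^(2*m+2) - c*z^(2*m+1) + 2*(c-1)*z^(m+1) - c*z + 1 = 0)
    ∧ Complex.abs z ≤ 7/20 := by
  set C : ℝ := Complex.abs c with hCdef
  have hC0 : (0:ℝ) < C := lt_trans (by norm_num) hc
  have hc0 : c ≠ 0 := by
    intro h
    rw [hCdef, h] at hC0
    simp at hC0
  have hc1 : Complex.abs (c - 1) ≤ C + 1 := by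
    have := Complex.abs.sub_le_add c 1
    simpa using this
  set φ : ℂ → ℂ := fun z => (1 + z^(2*m+2) - c*z^(2*m+1) + 2*(c-1)*z^(m+1))/c with hφdef
  have hmapsto : ∀ z : ℂ, Complex.abs z ≤ 7/20 → Complex.abs (φ z) ≤ 7/20 := by
    intro z hz
    have ht0 : (0:ℝ) ≤ Complex.abs z := Complex.abs.nonneg z
    have hnum : Complex.abs (1 + z^(2*m+2) - c*z^(2*m+1) + 2*(c-1)*z^(m+1)) ≤ (7/20) * C := by
      have hre : 1 + z^(2*m+2) - c*z^(2*m+1) + 2*(c-1)*z^(m+1)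
          = z^(2*m+2) - c*z^(2*m+1) + 2*(c-1)*z^(m+1) + 1 := by ring
      rw [hre]
      have h := stmt6_abs4 (z^(2*m+2)) (c*z^(2*m+1)) (2*(c-1)*z^(m+1))
      have he : Complex.abs (z^(2*m+2)) + Complex.abs (c*z^(2*m+1))
            + Complex.abs (2*(c-1)*z^(m+1)) + 1
          = Complex.abs z^(2*m+2) + C*Complex.abs z^(2*m+1)
            + 2*Complex.abs (c-1)*Complex.abs z^(m+1) + 1 := by
        simp [map_mul, map_pow, hCdef]
      rw [he] at h
      refine le_trans h ?_
      have hs1 : Complex.abs z^(m+1) ≤ (7/20 : ℝ)^(m+1) :=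
        pow_le_pow_left₀ ht0 hz _
      have hs1' : (7/20 : ℝ)^(m+1) ≤ (7/20 : ℝ)^3 :=
        pow_le_pow_of_le_one (by norm_num) (by norm_num) (by omega)
      have hs2 : Complex.abs z^(2*m+1) ≤ (7/20 : ℝ)^5 :=
        le_trans (pow_le_pow_left₀ ht0 hz _)
          (pow_le_pow_of_le_one (by norm_num) (by norm_num) (by omega))
      have hs3 : Complex.abs z^(2*m+2) ≤ (7/20 : ℝ)^6 :=
        le_trans (pow_le_pow_left₀ ht0 hz _)
          (pow_le_pow_of_le_one (by norm_num) (by norm_num) (by omega))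
      have habs1 : (0:ℝ) ≤ Complex.abs (c-1) := Complex.abs.nonneg _
      have hb1 : 2*Complex.abs (c-1)*Complex.abs z^(m+1) ≤ 2*(C+1)*(7/20:ℝ)^3 := by
        have h3 : Complex.abs z^(m+1) ≤ (7/20:ℝ)^3 := le_trans hs1 hs1'
        have hp : (0:ℝ) ≤ Complex.abs z^(m+1) := by positivity
        nlinarith
      have hb2 : C*Complex.abs z^(2*m+1) ≤ C*(7/20:ℝ)^5 :=
        mul_le_mul_of_nonneg_left hs2 (le_of_lt hC0)
      nlinarith
    rw [hφdef]
    simp only [map_div₀]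
    rw [← hCdef, div_le_iff₀ hC0]
    linarith [hnum]
  have hlip : ∀ a b : ℂ, Complex.abs a ≤ 7/20 → Complex.abs b ≤ 7/20 →
      Complex.abs (φ a - φ b) ≤ (19/20) * Complex.abs (a - b) := by
    intro a b ha hb
    have hre : φ a - φ b = ((a^(2*m+2)-b^(2*m+2)) - c*(a^(2*m+1)-b^(2*m+1))
        + 2*(c-1)*(a^(m+1)-b^(m+1)))/c := by
      rw [hφdef]
      field_simp
      ring
    rw [hre, map_div₀, ← hCdef, div_le_iff₀ hC0]
    have h := stmt6_diffbound m hm c hc a b ha hb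
    rw [← hCdef] at h
    linarith [h]
  set K : Set ℂ := Metric.closedBall (0:ℂ) (7/20) with hKdef
  have hmem : ∀ z : ℂ, z ∈ K ↔ Complex.abs z ≤ 7/20 := by
    intro z
    rw [hKdef, Metric.mem_closedBall, Complex.dist_eq, sub_zero, ← Complex.abs_apply]
  haveI : CompleteSpace K := IsClosed.completeSpace_coe (hs := Metric.isClosed_closedBall)
  haveI : Nonempty K := ⟨⟨0, by rw [hmem]; norm_num⟩⟩
  set F : K → K := fun z => ⟨φ z.1, by rw [hmem]; exact hmapsto z.1 ((hmem z.1).mp z.2)⟩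
    with hFdef
  have hcontr : ContractingWith ⟨19/20, by norm_num⟩ F := by
    constructor
    · exact NNReal.coe_lt_coe.mp
        (show ((⟨19/20, by norm_num⟩ : NNReal) : ℝ) < ((1 : NNReal) : ℝ) by norm_num)
    · apply LipschitzWith.of_dist_le_mul
      intro x y
      simp only [Subtype.dist_eq, Complex.dist_eq]
      have := hlip x.1 y.1 ((hmem x.1).mp x.2) ((hmem y.1).mp y.2)
      convert this using 2 <;> rfl
  set z0 : K := ContractingWith.fixedPoint F hcontr with hz0def
  have hfix : F z0 = z0 := ContractingWith.fixedPoint_isFixedPt hcontr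
  have hfix' : φ z0.1 = z0.1 := congrArg Subtype.val hfix
  refine ⟨z0.1, ?_, (hmem z0.1).mp z0.2⟩
  have hev : z0.1^(2*m+2) - c*z0.1^(2*m+1) + 2*(c-1)*z0.1^(m+1) - c*z0.1 + 1
      = c * (φ z0.1 - z0.1) := by
    have hφz : φ z0.1 = (1 + (z0.1:ℂ)^(2*m+2) - c*z0.1^(2*m+1) + 2*(c-1)*z0.1^(m+1))/c := rfl
    rw [hφz]
    field_simp
    ring
  rw [hev, hfix']
  simp

set_option maxHeartbeats 1000000 in
theorem stmt_6 (c : ℂ) (hc : 81 / 14 < ‖c‖) (m : ℕ) (hm : 2 ≤ m) :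
    (((Polynomial.X ^ (2 * m + 2) - Polynomial.C c * Polynomial.X ^ (2 * m + 1)
          + Polynomial.C (2 * (c - 1)) * Polynomial.X ^ (m + 1)
          - Polynomial.C c * Polynomial.X + 1 : Polynomial ℂ)).roots.filter
        fun z => ‖z‖ < (2 : ℝ) ^ (-(2 : ℝ) / m)).card = 1 := by
  replace hc : 81 / 14 < Complex.abs c := hc
  change (((Polynomial.X ^ (2 * m + 2) - Polynomial.C c * Polynomial.X ^ (2 * m + 1)
          + Polynomial.C (2 * (c - 1)) * Polynomial.X ^ (m + 1)
          - Polynomial.C c * Polynomial.X + 1 : Polynomial ℂ)).roots.filter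
        fun z => Complex.abs z < (2 : ℝ) ^ (-(2 : ℝ) / m)).card = 1
  set p : Polynomial ℂ := Polynomial.X ^ (2 * m + 2) - Polynomial.C c * Polynomial.X ^ (2 * m + 1)
          + Polynomial.C (2 * (c - 1)) * Polynomial.X ^ (m + 1)
          - Polynomial.C c * Polynomial.X + 1 with hpdef
  set R : ℝ := (2 : ℝ) ^ (-(2 : ℝ) / m) with hRdef
  set C : ℝ := Complex.abs c with hCdef
  have hm0 : (m : ℝ) ≠ 0 := Nat.cast_ne_zero.mpr (by omega)
  have hmpos : (0:ℝ) < m := by positivity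
  have hR0 : 0 < R := Real.rpow_pos_of_pos (by norm_num) _
  have hR1 : R < 1 := Real.rpow_lt_one_of_one_lt_of_neg (by norm_num)
    (div_neg_of_neg_of_pos (by norm_num) hmpos)
  have hRhalf : 1/2 ≤ R := by
    have h : (2:ℝ) ^ (-1 : ℝ) ≤ (2:ℝ) ^ (-(2:ℝ)/m) := by
      apply (Real.rpow_le_rpow_left_iff (by norm_num)).mpr
      rw [neg_div, neg_le_neg_iff, div_le_one hmpos]
      exact_mod_cast hm
    rw [hRdef]
    rw [Real.rpow_neg_one] at h
    linarith
  have hRm : R ^ m = 1/4 := by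
    rw [hRdef, ← Real.rpow_natCast ((2:ℝ) ^ (-(2:ℝ)/m)) m, ← Real.rpow_mul (by norm_num)]
    rw [div_mul_cancel₀ _ hm0]
    norm_num
  have heval : ∀ z : ℂ, p.eval z
      = z^(2*m+2) - c*z^(2*m+1) + 2*(c-1)*z^(m+1) - c*z + 1 := by
    intro z
    simp [hpdef]
  have hp0 : p ≠ 0 := by
    intro h
    have h1 : p.eval 0 = 1 := by
      rw [heval]
      simp [zero_pow, Nat.succ_ne_zero]
    rw [h] at h1
    simp at h1
  have hC0 : (0:ℝ) < C := lt_trans (by norm_num) hc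
  have hc0 : c ≠ 0 := by
    intro h
    rw [hCdef, h] at hC0
    simp at hC0
  have hc1 : Complex.abs (c - 1) ≤ C + 1 := by
    have := Complex.abs.sub_le_add c 1
    simpa using this
  -- all roots in the disk are within 7/20
  have hsmall : ∀ z : ℂ, p.IsRoot z → Complex.abs z < R → Complex.abs z ≤ 7/20 := by
    intro z hz hzR
    set t : ℝ := Complex.abs z with htdef
    have ht0 : 0 ≤ t := Complex.abs.nonneg z
    have hz0 : z^(2*m+2) - c*z^(2*m+1) + 2*(c-1)*z^(m+1) - c*z + 1 = 0 := by
      have := hz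
      rwa [Polynomial.IsRoot, heval] at this
    have hcz : c*z = z^(2*m+2) - c*z^(2*m+1) + 2*(c-1)*z^(m+1) + 1 := by
      linear_combination -hz0
    have hmain : C * t ≤ t^(2*m+2) + C*t^(2*m+1) + 2*Complex.abs (c-1)*t^(m+1) + 1 := by
      calc C * t = Complex.abs (c*z) := (map_mul _ _ _).symm
        _ = Complex.abs (z^(2*m+2) - c*z^(2*m+1) + 2*(c-1)*z^(m+1) + 1) := by rw [hcz]
        _ ≤ Complex.abs (z^(2*m+2)) + Complex.abs (c*z^(2*m+1))
              + Complex.abs (2*(c-1)*z^(m+1)) + 1 := stmt6_abs4 _ _ _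
        _ = t^(2*m+2) + C*t^(2*m+1) + 2*Complex.abs (c-1)*t^(m+1) + 1 := by
            simp [map_mul, map_pow, hCdef, htdef]
    by_contra hgt
    push_neg at hgt
    have habs1 : (0:ℝ) ≤ Complex.abs (c-1) := Complex.abs.nonneg _
    rcases le_or_gt t (1/2) with hhalf | hhalf
    · -- t ≤ 1/2 : use t^6, t^5, t^3 bounds
      have ht1 : t ≤ 1 := by linarith
      have h3 : t^(m+1) ≤ t^3 := pow_le_pow_of_le_one ht0 ht1 (by omega)
      have h5 : t^(2*m+1) ≤ t^5 := pow_le_pow_of_le_one ht0 ht1 (by omega)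
      have h6 : t^(2*m+2) ≤ t^6 := pow_le_pow_of_le_one ht0 ht1 (by omega)
      have hb3 : 2*Complex.abs (c-1)*t^(m+1) ≤ 2*(C+1)*t^3 := by
        have := mul_le_mul hc1 h3 (pow_nonneg ht0 _) (by linarith)
        nlinarith
      have hb5 : C*t^(2*m+1) ≤ C*t^5 := mul_le_mul_of_nonneg_left h5 (le_of_lt hC0)
      have := stmt6_ann1 C t hc hgt hhalf
      linarith
    · -- 1/2 < t < 1
      have htm : t^m < 1/4 := by
        have h := pow_lt_pow_left₀ hzR ht0 (by omega : m ≠ 0)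
        rwa [hRm] at h
      have ht1 : t < 1 := lt_of_lt_of_le hzR (le_of_lt hR1)
      have h3 : t^(m+1) ≤ 1/4 * t := by
        rw [pow_succ]
        exact mul_le_mul_of_nonneg_right (le_of_lt htm) ht0
      have h5 : t^(2*m+1) ≤ 1/16 * t := by
        rw [show 2*m+1 = m+(m+1) by ring, pow_add, pow_succ]
        calc t^m * (t^m * t) ≤ (1/4) * ((1/4) * t) := by
              apply mul_le_mul (le_of_lt htm) _ (by positivity) (by norm_num)
              exact mul_le_mul_of_nonneg_right (le_of_lt htm) ht0
          _ = 1/16 * t := by ring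
      have h6 : t^(2*m+2) ≤ 1/16 * t^2 := by
        rw [show 2*m+2 = m+(m+2) by ring, pow_add, show m+2 = m+1+1 by ring, pow_add,
          pow_succ]
        calc t^m * (t^m * t * t^1) ≤ (1/4) * ((1/4) * t * t) := by
              apply mul_le_mul (le_of_lt htm) _ (by positivity) (by norm_num)
              rw [pow_one]
              apply mul_le_mul_of_nonneg_right _ ht0
              exact mul_le_mul_of_nonneg_right (le_of_lt htm) ht0
          _ = 1/16 * t^2 := by ring
      have hb3 : 2*Complex.abs (c-1)*t^(m+1) ≤ (C+1)*t/2 := by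
        have := mul_le_mul hc1 h3 (pow_nonneg ht0 _) (by linarith)
        nlinarith
      have hb5 : C*t^(2*m+1) ≤ C*t/16 := by
        have := mul_le_mul_of_nonneg_left h5 (le_of_lt hC0)
        linarith [this]
      have := stmt6_ann2 C t hc hhalf ht1
      linarith
  -- uniqueness of roots in the small ball
  have huniq : ∀ a b : ℂ, p.IsRoot a → p.IsRoot b →
      Complex.abs a ≤ 7/20 → Complex.abs b ≤ 7/20 → a = b := by
    intro a b ha hb haa hbb
    by_contra hne
    have hd : 0 < Complex.abs (a - b) := Complex.abs.pos (sub_ne_zero.mpr hne)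
    have ha0 : a^(2*m+2) - c*a^(2*m+1) + 2*(c-1)*a^(m+1) - c*a + 1 = 0 := by
      have := ha
      rwa [Polynomial.IsRoot, heval] at this
    have hb0 : b^(2*m+2) - c*b^(2*m+1) + 2*(c-1)*b^(m+1) - c*b + 1 = 0 := by
      have := hb
      rwa [Polynomial.IsRoot, heval] at this
    have hsub : (a^(2*m+2) - b^(2*m+2)) - c*(a^(2*m+1) - b^(2*m+1))
        + 2*(c-1)*(a^(m+1) - b^(m+1)) = c*(a-b) := by
      linear_combination ha0 - hb0
    have h := stmt6_diffbound m hm c hc a b haa hbb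
    rw [hsub, map_mul] at h
    nlinarith [hd, hC0]
  -- simplicity
  have hder : ∀ z : ℂ, (Polynomial.derivative p).eval z
      = ((2*m+2 : ℕ) : ℂ)*z^(2*m+1) - c*(((2*m+1:ℕ) : ℂ)*z^(2*m))
        + 2*(c-1)*(((m+1:ℕ) : ℂ)*z^m) - c := by
    intro z
    rw [hpdef]
    simp only [Polynomial.derivative_add, Polynomial.derivative_sub, Polynomial.derivative_mul,
      Polynomial.derivative_X_pow, Polynomial.derivative_one, Polynomial.derivative_C,
      Polynomial.derivative_X, zero_mul, mul_one, add_zero, mul_zero, zero_add]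
    rw [show 2*m+2-1 = 2*m+1 from by omega, show 2*m+1-1 = 2*m from by omega,
      show m+1-1 = m from by omega]
    simp [Polynomial.eval_add, Polynomial.eval_sub, Polynomial.eval_mul, Polynomial.eval_pow]
  have hsimple : ∀ a : ℂ, Complex.abs a ≤ 7/20 →
      ¬ ((Polynomial.X - Polynomial.C a)^2 ∣ p) := by
    intro a haa hdvd
    obtain ⟨q, hq⟩ := hdvd
    have hda : (Polynomial.derivative p).eval a = 0 := by
      rw [hq]
      simp [Polynomial.derivative_mul, Polynomial.derivative_pow]
    rw [hder a] at hda
    have hsub : (((2*m+2 : ℕ) : ℂ)*a^(2*m+1)) - c*(((2*m+1:ℕ) : ℂ)*a^(2*m))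
        + 2*(c-1)*(((m+1:ℕ) : ℂ)*a^m) = c := by
      linear_combination hda
    have hA : Complex.abs (((2*m+2 : ℕ) : ℂ)*a^(2*m+1))
        ≤ (2*(m:ℝ)+2)*(7/20)^(2*m+1) * 1 := by
      rw [map_mul, map_pow, Complex.abs_natCast, mul_one]
      have := pow_le_pow_left₀ (Complex.abs.nonneg a) haa (2*m+1)
      have h2 : ((2*m+2 : ℕ) : ℝ) = 2*(m:ℝ)+2 := by push_cast; ring
      rw [h2]
      apply mul_le_mul_of_nonneg_left this (by positivity)
    have hB : Complex.abs (((2*m+1 : ℕ) : ℂ)*a^(2*m))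
        ≤ (2*(m:ℝ)+1)*(7/20)^(2*m) * 1 := by
      rw [map_mul, map_pow, Complex.abs_natCast, mul_one]
      have := pow_le_pow_left₀ (Complex.abs.nonneg a) haa (2*m)
      have h2 : ((2*m+1 : ℕ) : ℝ) = 2*(m:ℝ)+1 := by push_cast; ring
      rw [h2]
      apply mul_le_mul_of_nonneg_left this (by positivity)
    have hD : Complex.abs (((m+1 : ℕ) : ℂ)*a^m)
        ≤ ((m:ℝ)+1)*(7/20)^m * 1 := by
      rw [map_mul, map_pow, Complex.abs_natCast, mul_one]
      have := pow_le_pow_left₀ (Complex.abs.nonneg a) haa m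
      have h2 : ((m+1 : ℕ) : ℝ) = (m:ℝ)+1 := by push_cast; ring
      rw [h2]
      apply mul_le_mul_of_nonneg_left this (by positivity)
    have h := stmt6_master m hm c hc _ _ _ 1 (by norm_num) hA hB hD
    rw [hsub] at h
    rw [← hCdef] at h
    nlinarith [hC0]
  -- existence
  have hexist : ∃ z : ℂ, p.IsRoot z ∧ Complex.abs z ≤ 7/20 := by
    obtain ⟨z, hz, hzb⟩ := stmt6_exists m hm c hc
    exact ⟨z, by rw [Polynomial.IsRoot, heval]; exact hz, hzb⟩
  -- assembly
  set S := p.roots.filter (fun z => Complex.abs z < R) with hSdef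
  have hub : S.card ≤ 1 := by
    by_contra hgt
    push_neg at hgt
    have h2 : 2 ≤ S.card := hgt
    obtain ⟨a, haS⟩ := Multiset.card_pos_iff_exists_mem.mp (show 0 < Multiset.card S by omega)
    have haroot : p.IsRoot a ∧ Complex.abs a < R := by
      have h := Multiset.mem_filter.mp haS
      exact ⟨((Polynomial.mem_roots hp0).mp h.1), h.2⟩
    have hasmall : Complex.abs a ≤ 7/20 := hsmall a haroot.1 haroot.2
    by_cases hcnt : 2 ≤ S.count a
    · have hle : S.count a ≤ p.roots.count a :=
        Multiset.count_le_of_le a (Multiset.filter_le _ _)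
      have hmult : 2 ≤ p.rootMultiplicity a := by
        rw [← Polynomial.count_roots]
        omega
      have hdvd : (Polynomial.X - Polynomial.C a)^2 ∣ p :=
        (Polynomial.le_rootMultiplicity_iff hp0).mp hmult
      exact hsimple a hasmall hdvd
    · have hcnt1 : S.count a = 1 := by
        have : 1 ≤ S.count a := Multiset.one_le_count_iff_mem.mpr haS
        omega
      have hcard_erase : 1 ≤ (S.erase a).card := by
        rw [Multiset.card_erase_of_mem haS, Nat.pred_eq_sub_one]
        omega
      obtain ⟨b, hbE⟩ := Multiset.card_pos_iff_exists_mem.mp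
        (show 0 < Multiset.card (S.erase a) by omega)
      have hbS : b ∈ S := Multiset.mem_of_mem_erase hbE
      have hbne : b ≠ a := by
        intro h
        subst h
        have := Multiset.count_erase_self b S
        have hmem := Multiset.one_le_count_iff_mem.mpr hbE
        omega
      have hbroot : p.IsRoot b ∧ Complex.abs b < R := by
        have h := Multiset.mem_filter.mp hbS
        exact ⟨((Polynomial.mem_roots hp0).mp h.1), h.2⟩
      have hbsmall : Complex.abs b ≤ 7/20 := hsmall b hbroot.1 hbroot.2
      exact hbne (huniq b a hbroot.1 haroot.1 hbsmall hasmall)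
  have hlb : 1 ≤ S.card := by
    obtain ⟨z, hzroot, hzb⟩ := hexist
    have hzR : Complex.abs z < R := lt_of_le_of_lt hzb (by linarith)
    have hzS : z ∈ S := Multiset.mem_filter.mpr ⟨(Polynomial.mem_roots hp0).mpr hzroot, hzR⟩
    have := Multiset.card_pos_iff_exists_mem.mpr ⟨z, hzS⟩
    omega
  omega
end

section
/- Let f_m(q) = q^{2m+2} - c q^{2m+1} + 2(c-1) q^{m+1} - c q + 1 with |c| ≥ 4 and m ≥ 4. Then every root of f_m with absolute value less than 2^{-2/m} in fact has absolute value less than 2/|c|. -/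
private lemma boot_step_aux (C x s B B' : ℝ) (hC : 4 ≤ C) (hx : 0 ≤ x) (hs0 : 0 ≤ s)
    (key : C * x * (1 - s) ^ 2 ≤ (1 + s * x) ^ 2) (hsx : s ≤ x ^ 4)
    (hB : x ≤ B) (hB4 : B ^ 4 ≤ 1 / 2)
    (hnum : (1 + B ^ 5) ^ 2 ≤ 4 * B' * (1 - B ^ 4) ^ 2) : C * x ≤ 4 * B' := by
  have hC0 : (0:ℝ) ≤ C := by linarith
  have hCx : 0 ≤ C * x := mul_nonneg hC0 hx
  have hx4 : x ^ 4 ≤ B ^ 4 := pow_le_pow_left₀ hx hB 4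
  have hx5 : x ^ 5 ≤ B ^ 5 := pow_le_pow_left₀ hx hB 5
  have hsB : s ≤ B ^ 4 := hsx.trans hx4
  have hsxB : s * x ≤ B ^ 5 := by nlinarith [mul_nonneg (sub_nonneg.2 hsx) hx]
  have e1 : (1 - B ^ 4) ^ 2 ≤ (1 - s) ^ 2 := by
    nlinarith [mul_nonneg (sub_nonneg.2 hsB) (show (0:ℝ) ≤ 2 - s - B ^ 4 by nlinarith)]
  have e2 : (1 + s * x) ^ 2 ≤ (1 + B ^ 5) ^ 2 := by
    nlinarith [mul_nonneg hs0 hx]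
  have h1 : C * x * (1 - B ^ 4) ^ 2 ≤ (1 + B ^ 5) ^ 2 := by
    nlinarith [mul_le_mul_of_nonneg_left e1 hCx]
  have hpos : (0:ℝ) < (1 - B ^ 4) ^ 2 := by nlinarith
  nlinarith [h1, hnum, hpos]

private lemma main_real_aux (C x s : ℝ) (hC : 4 ≤ C) (hx : 0 ≤ x) (hx1 : x < 1)
    (hs0 : 0 ≤ s) (hs : s < 1 / 4) (hsx : s ≤ x ^ 4)
    (key : C * x * (1 - s) ^ 2 ≤ (1 + s * x) ^ 2) : C * x < 2 := by
  have hC0 : (0:ℝ) ≤ C := by linarith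
  have hCx : 0 ≤ C * x := mul_nonneg hC0 hx
  have hsx1 : s * x ≤ s := by nlinarith
  have e1 : (3/4 : ℝ) ^ 2 ≤ (1 - s) ^ 2 := by nlinarith
  have e2 : (1 + s * x) ^ 2 ≤ (5/4 : ℝ) ^ 2 := by nlinarith [mul_nonneg hs0 hx]
  have h1 : C * x ≤ 25 / 9 := by
    nlinarith [mul_le_mul_of_nonneg_left e1 hCx]
  have hxB1 : x ≤ 0.695 := by nlinarith [mul_nonneg (sub_nonneg.2 hC) hx]
  have h2 : C * x ≤ 4 * 0.58 := by
    apply boot_step_aux C x s 0.695 0.58 hC hx hs0 key hsx hxB1 <;> norm_num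
  have hxB2 : x ≤ 0.58 := by nlinarith [mul_nonneg (sub_nonneg.2 hC) hx]
  have h3 : C * x ≤ 4 * 0.37 := by
    apply boot_step_aux C x s 0.58 0.37 hC hx hs0 key hsx hxB2 <;> norm_num
  linarith

theorem stmt_7 (c : ℂ) (hc : 4 ≤ ‖c‖) (m : ℕ) (hm : 4 ≤ m) (q : ℂ)
    (hroot : q ^ (2 * m + 2) - c * q ^ (2 * m + 1) + 2 * (c - 1) * q ^ (m + 1)
        - c * q + 1 = 0)
    (hsmall : ‖q‖ < (2 : ℝ) ^ (-(2 : ℝ) / m)) :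
    ‖q‖ < 2 / ‖c‖ := by
  set x := ‖q‖ with hxdef
  have hx0 : 0 ≤ x := norm_nonneg q
  have hm0 : (m:ℝ) ≠ 0 := by positivity
  have hx1 : x < 1 := by
    refine hsmall.trans_le (Real.rpow_le_one_of_one_le_of_nonpos (by norm_num) ?_)
    apply div_nonpos_of_nonpos_of_nonneg (by norm_num) (by positivity)
  have hsm : x ^ m < 1 / 4 := by
    have h1 : x ^ m < ((2:ℝ) ^ (-(2:ℝ) / m)) ^ m :=
      pow_lt_pow_left₀ hsmall hx0 (by omega)
    have h2 : ((2:ℝ) ^ (-(2:ℝ) / m)) ^ m = 1 / 4 := by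
      rw [← Real.rpow_natCast ((2:ℝ) ^ (-(2:ℝ) / m)) m, ← Real.rpow_mul (by norm_num)]
      rw [show -(2:ℝ) / m * m = ((-2:ℤ):ℝ) by field_simp; push_cast; ring, Real.rpow_intCast]
      norm_num
    linarith
  have hkey : c * q * (q ^ m - 1) ^ 2 = (q ^ (m + 1) - 1) ^ 2 := by
    linear_combination -hroot
  have habs : ‖c‖ * x * (‖q ^ m - 1‖) ^ 2
      = (‖q ^ (m+1) - 1‖) ^ 2 := by
    have := congrArg norm hkey
    simpa [norm_mul, norm_pow] using this
  have hA : 1 - x ^ m ≤ ‖q ^ m - 1‖ := by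
    have h2 := norm_add_le (1 - q ^ m) (q ^ m)
    rw [show q ^ m - 1 = -(1 - q ^ m) by ring, norm_neg]
    simp only [sub_add_cancel, norm_one, norm_pow] at h2 ⊢
    linarith
  have hB : ‖q ^ (m+1) - 1‖ ≤ x ^ (m+1) + 1 := by
    have h := norm_add_le (q ^ (m+1)) (-1)
    simp only [norm_neg, norm_one, norm_pow] at h
    calc ‖q ^ (m+1) - 1‖ = ‖q ^ (m+1) + (-1)‖ := by ring_nf
      _ ≤ x ^ (m+1) + 1 := by simpa [norm_pow] using h
  have hA0 : 0 ≤ 1 - x ^ m := by linarith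
  have hsq : (1 - x ^ m) ^ 2 ≤ (‖q ^ m - 1‖) ^ 2 :=
    pow_le_pow_left₀ hA0 hA 2
  have hCx : 0 ≤ ‖c‖ * x := mul_nonneg (norm_nonneg c) hx0
  have hxm1 : x ^ (m+1) = x ^ m * x := pow_succ x m
  have key : ‖c‖ * x * (1 - x ^ m) ^ 2 ≤ (1 + x ^ m * x) ^ 2 := by
    calc ‖c‖ * x * (1 - x ^ m) ^ 2
        ≤ ‖c‖ * x * (‖q ^ m - 1‖) ^ 2 :=
          mul_le_mul_of_nonneg_left hsq hCx
      _ = (‖q ^ (m+1) - 1‖) ^ 2 := habs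
      _ ≤ (1 + x ^ m * x) ^ 2 := by
          rw [← hxm1]
          nlinarith [hB, norm_nonneg (q ^ (m+1) - 1)]
  have hsx : x ^ m ≤ x ^ 4 := pow_le_pow_of_le_one hx0 hx1.le hm
  have hfin : ‖c‖ * x < 2 :=
    main_real_aux (‖c‖) x (x ^ m) hc hx0 hx1 (by positivity) hsm hsx key
  have hcpos : 0 < ‖c‖ := by linarith
  rw [lt_div_iff₀ hcpos]
  linarith [hfin]
end

section
/- Let κ > 0 and let x > 0, y = √(κ² + x²). Then for all l > 0, the quantity g̃(x) := [(κ² + x² + y²) sinh(x) + 2κy cosh(x)] sinh(lx) - |(κ² − x² − y²) sin(y) − 2κx cos(y)| · |sin(ly)| is strictly positive. In particular, [(κ²+x²+y²) sinh x + 2κy cosh x] sinh(lx) ± [(κ²−x²−y²) sin y − 2κx cos y] sin(ly) > 0. -/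
theorem stmt_13 (κ l x y : ℝ) (hκ : 0 < κ) (hl : 0 < l) (hx : 0 < x)
    (hy : y = Real.sqrt (κ ^ 2 + x ^ 2)) :
    0 < ((κ ^ 2 + x ^ 2 + y ^ 2) * Real.sinh x + 2 * κ * y * Real.cosh x) * Real.sinh (l * x)
        - |(κ ^ 2 - x ^ 2 - y ^ 2) * Real.sin y - 2 * κ * x * Real.cos y| * |Real.sin (l * y)| ∧
    0 < ((κ ^ 2 + x ^ 2 + y ^ 2) * Real.sinh x + 2 * κ * y * Real.cosh x) * Real.sinh (l * x)
        + ((κ ^ 2 - x ^ 2 - y ^ 2) * Real.sin y - 2 * κ * x * Real.cos y) * Real.sin (l * y) ∧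
    0 < ((κ ^ 2 + x ^ 2 + y ^ 2) * Real.sinh x + 2 * κ * y * Real.cosh x) * Real.sinh (l * x)
        - ((κ ^ 2 - x ^ 2 - y ^ 2) * Real.sin y - 2 * κ * x * Real.cos y) * Real.sin (l * y) := by
  have hy0 : 0 < y := by rw [hy]; positivity
  have hy2 : y ^ 2 = κ ^ 2 + x ^ 2 := by
    rw [hy, Real.sq_sqrt]; positivity
  set A := ((κ ^ 2 + x ^ 2 + y ^ 2) * Real.sinh x + 2 * κ * y * Real.cosh x) * Real.sinh (l * x)
    with hA
  set B := (κ ^ 2 - x ^ 2 - y ^ 2) * Real.sin y - 2 * κ * x * Real.cos y with hB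
  -- lower bound for A
  have hsx : x < Real.sinh x := Real.self_lt_sinh_iff.2 hx
  have hcx : 1 < Real.cosh x := Real.one_lt_cosh.2 hx.ne'
  have hslx : l * x < Real.sinh (l * x) := Real.self_lt_sinh_iff.2 (by positivity)
  have hAlb : 2 * l * x * (x * y ^ 2 + κ * y) < A := by
    rw [hA]
    have hinner : 2 * x * y ^ 2 + 2 * κ * y <
        (κ ^ 2 + x ^ 2 + y ^ 2) * Real.sinh x + 2 * κ * y * Real.cosh x := by
      nlinarith [mul_pos hκ hy0, sq_nonneg y]
    have hlx : 0 < l * x := by positivity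
    have hin0 : 0 < 2 * x * y ^ 2 + 2 * κ * y := by positivity
    nlinarith [mul_lt_mul hinner hslx.le hlx (by linarith)]
  -- upper bound for |B| * |sin (l y)|
  have hBub : |B| * |Real.sin (l * y)| ≤ 2 * l * x * (x * y ^ 2 + κ * y) := by
    have h1 : |B| ≤ 2 * x ^ 2 * y + 2 * κ * x := by
      rw [hB]
      have hs : |Real.sin y| ≤ y := by
        calc |Real.sin y| ≤ |y| := Real.abs_sin_le_abs
          _ = y := abs_of_pos hy0
      have hc : |Real.cos y| ≤ 1 := Real.abs_cos_le_one y
      calc |(κ ^ 2 - x ^ 2 - y ^ 2) * Real.sin y - 2 * κ * x * Real.cos y|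
          ≤ |(κ ^ 2 - x ^ 2 - y ^ 2) * Real.sin y| + |2 * κ * x * Real.cos y| := abs_sub _ _
        _ = |κ ^ 2 - x ^ 2 - y ^ 2| * |Real.sin y| + |2 * κ * x| * |Real.cos y| := by
            rw [abs_mul, abs_mul]
        _ ≤ 2 * x ^ 2 * y + 2 * κ * x := by
            have he : |κ ^ 2 - x ^ 2 - y ^ 2| = 2 * x ^ 2 := by
              rw [hy2]; rw [abs_of_nonpos (by nlinarith)]; ring
            have he2 : |2 * κ * x| = 2 * κ * x := abs_of_pos (by positivity)
            rw [he, he2]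
            have := mul_le_mul_of_nonneg_left hs (by positivity : (0:ℝ) ≤ 2 * x ^ 2)
            have := mul_le_mul_of_nonneg_left hc (by positivity : (0:ℝ) ≤ 2 * κ * x)
            linarith
    have h2 : |Real.sin (l * y)| ≤ l * y := by
      calc |Real.sin (l * y)| ≤ |l * y| := Real.abs_sin_le_abs
        _ = l * y := abs_of_pos (by positivity)
    calc |B| * |Real.sin (l * y)| ≤ (2 * x ^ 2 * y + 2 * κ * x) * (l * y) :=
          mul_le_mul h1 h2 (abs_nonneg _) (by positivity)
      _ = 2 * l * x * (x * y ^ 2 + κ * y) := by ring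
  have key : |B| * |Real.sin (l * y)| < A := lt_of_le_of_lt hBub hAlb
  have habs : |B * Real.sin (l * y)| = |B| * |Real.sin (l * y)| := abs_mul _ _
  have h2 := neg_abs_le (B * Real.sin (l * y))
  have h3 := le_abs_self (B * Real.sin (l * y))
  refine ⟨by linarith, by rw [habs] at h2 h3; linarith, by rw [habs] at h2 h3; linarith⟩
end

section
/- Let κ > 0, l > 0, x > 0 and y = √(κ² + x²). Then 4[y²(y²+κ²) sinh(x(l+2)) + 2κy³ cosh(x(l+2))] sinh(lx) + 4[x²(x²−κ²) sin(y(l+2)) + 2κx³ cos(y(l+2))] sin(ly) > 4 l(l+2) x² y² κ² + 8 l x y κ³ > 0. -/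
theorem stmt_14 (κ l x y : ℝ) (hκ : 0 < κ) (hl : 0 < l) (hx : 0 < x)
    (hy : y = Real.sqrt (κ ^ 2 + x ^ 2)) :
    4 * (y ^ 2 * (y ^ 2 + κ ^ 2) * Real.sinh (x * (l + 2))
          + 2 * κ * y ^ 3 * Real.cosh (x * (l + 2))) * Real.sinh (l * x)
      + 4 * (x ^ 2 * (x ^ 2 - κ ^ 2) * Real.sin (y * (l + 2))
          + 2 * κ * x ^ 3 * Real.cos (y * (l + 2))) * Real.sin (l * y)
      > 4 * l * (l + 2) * x ^ 2 * y ^ 2 * κ ^ 2 + 8 * l * x * y * κ ^ 3 ∧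
    4 * l * (l + 2) * x ^ 2 * y ^ 2 * κ ^ 2 + 8 * l * x * y * κ ^ 3 > 0 := by
  have hy0 : 0 < y := hy ▸ Real.sqrt_pos.mpr (by positivity)
  have hy2 : y ^ 2 = κ ^ 2 + x ^ 2 := by
    rw [hy, Real.sq_sqrt (by positivity)]
  constructor
  · set S1 := Real.sinh (x * (l + 2)) with hS1def
    set C1 := Real.cosh (x * (l + 2)) with hC1def
    set S2 := Real.sinh (l * x) with hS2def
    set sY := Real.sin (y * (l + 2)) with hsYdef
    set cY := Real.cos (y * (l + 2)) with hcYdef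
    set sly := Real.sin (l * y) with hslydef
    have hS1 : x * (l + 2) < S1 := Real.self_lt_sinh_iff.mpr (by positivity)
    have hC1 : 1 < C1 := Real.one_lt_cosh.mpr (by positivity)
    have hS2 : l * x < S2 := Real.self_lt_sinh_iff.mpr (by positivity)
    have hS2' : 0 < S2 := lt_trans (by positivity) hS2
    have hA : 4 * (y ^ 2 * (y ^ 2 + κ ^ 2) * (x * (l + 2)) + 2 * κ * y ^ 3 * 1) * (l * x)
        < 4 * (y ^ 2 * (y ^ 2 + κ ^ 2) * S1 + 2 * κ * y ^ 3 * C1) * S2 := by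
      have h1 : y ^ 2 * (y ^ 2 + κ ^ 2) * (x * (l + 2)) + 2 * κ * y ^ 3 * 1
          < y ^ 2 * (y ^ 2 + κ ^ 2) * S1 + 2 * κ * y ^ 3 * C1 := by
        gcongr <;> positivity
      have h0 : 0 < y ^ 2 * (y ^ 2 + κ ^ 2) * (x * (l + 2)) + 2 * κ * y ^ 3 * 1 := by
        positivity
      nlinarith [mul_pos h0 hS2']
    have hsY : |sY| ≤ y * (l + 2) :=
      calc |sY| ≤ |y * (l + 2)| := Real.abs_sin_le_abs
        _ = y * (l + 2) := abs_of_pos (by positivity)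
    have hcY : |cY| ≤ 1 := Real.abs_cos_le_one _
    have hsly : |sly| ≤ l * y :=
      calc |sly| ≤ |l * y| := Real.abs_sin_le_abs
        _ = l * y := abs_of_pos (by positivity)
    have hxk : |x ^ 2 - κ ^ 2| ≤ x ^ 2 + κ ^ 2 := by
      rw [abs_sub_le_iff]; constructor <;> nlinarith [sq_nonneg x, sq_nonneg κ]
    have h1 : |x ^ 2 * (x ^ 2 - κ ^ 2) * sY| ≤ x ^ 2 * (x ^ 2 + κ ^ 2) * (y * (l + 2)) := by
      rw [abs_mul, abs_mul, abs_of_nonneg (sq_nonneg x)]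
      gcongr
    have h2 : |2 * κ * x ^ 3 * cY| ≤ 2 * κ * x ^ 3 := by
      rw [abs_mul, abs_of_pos (show (0:ℝ) < 2 * κ * x ^ 3 by positivity)]
      exact mul_le_of_le_one_right (by positivity) hcY
    have hBin : |x ^ 2 * (x ^ 2 - κ ^ 2) * sY + 2 * κ * x ^ 3 * cY|
        ≤ x ^ 2 * (x ^ 2 + κ ^ 2) * (y * (l + 2)) + 2 * κ * x ^ 3 :=
      (abs_add_le _ _).trans (add_le_add h1 h2)
    have hB : |4 * (x ^ 2 * (x ^ 2 - κ ^ 2) * sY + 2 * κ * x ^ 3 * cY) * sly|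
        ≤ 4 * (x ^ 2 * (x ^ 2 + κ ^ 2) * (y * (l + 2)) + 2 * κ * x ^ 3) * (l * y) := by
      rw [abs_mul, abs_mul, show |(4:ℝ)| = 4 by norm_num]
      have := mul_le_mul hBin hsly (abs_nonneg _) (by positivity)
      nlinarith [this]
    have hB' : -(4 * (x ^ 2 * (x ^ 2 + κ ^ 2) * (y * (l + 2)) + 2 * κ * x ^ 3) * (l * y))
        ≤ 4 * (x ^ 2 * (x ^ 2 - κ ^ 2) * sY + 2 * κ * x ^ 3 * cY) * sly :=
      neg_le_of_abs_le hB
    have key : 4 * (y ^ 2 * (y ^ 2 + κ ^ 2) * (x * (l + 2)) + 2 * κ * y ^ 3 * 1) * (l * x)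
        - 4 * (x ^ 2 * (x ^ 2 + κ ^ 2) * (y * (l + 2)) + 2 * κ * x ^ 3) * (l * y)
        = 4 * l * (l + 2) * x ^ 2 * y ^ 2 * κ ^ 2 + 8 * l * x * y * κ ^ 3 := by
      linear_combination (4 * l * (l + 2) * x ^ 2 * y ^ 2 + 8 * κ * l * x * y) * hy2
    linarith [hA, hB', key]
  · have h1 : 0 < 4 * l * (l + 2) * x ^ 2 * y ^ 2 * κ ^ 2 :=
      by positivity
    have h2 : 0 < 8 * l * x * y * κ ^ 3 := by positivity
    linarith
end

section
/- Let κ > 0, s > 0, t̃ > κ and l > 0, and let x, y > 0 satisfy x² − y² = t̃² − κ² and 4x²y² = κ²s². Then [(κ²+x²+y²) sinh x + 2κy cosh x] sinh(lx) − |(κ²−x²−y²) sin y − 2κx cos y| · |sin(ly)| > l(κ²+x²+y²)(t̃²−κ²) > 0. -/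
theorem stmt_18 (κ s t l x y : ℝ) (hκ : 0 < κ) (hs : 0 < s) (ht : κ < t) (hl : 0 < l)
    (hx : 0 < x) (hy : 0 < y)
    (h1 : x ^ 2 - y ^ 2 = t ^ 2 - κ ^ 2) (h2 : 4 * x ^ 2 * y ^ 2 = κ ^ 2 * s ^ 2) :
    ((κ ^ 2 + x ^ 2 + y ^ 2) * Real.sinh x + 2 * κ * y * Real.cosh x) * Real.sinh (l * x)
        - |(κ ^ 2 - x ^ 2 - y ^ 2) * Real.sin y - 2 * κ * x * Real.cos y| * |Real.sin (l * y)|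
      > l * (κ ^ 2 + x ^ 2 + y ^ 2) * (t ^ 2 - κ ^ 2) ∧
    l * (κ ^ 2 + x ^ 2 + y ^ 2) * (t ^ 2 - κ ^ 2) > 0 := by
  have hA : (0:ℝ) < κ ^ 2 + x ^ 2 + y ^ 2 := by positivity
  have hsx : x < Real.sinh x := Real.self_lt_sinh_iff.2 hx
  have hcx : (1:ℝ) < Real.cosh x := Real.one_lt_cosh.2 hx.ne'
  have hslx : l * x < Real.sinh (l * x) := Real.self_lt_sinh_iff.2 (by positivity)
  have hslx0 : 0 < Real.sinh (l * x) := lt_trans (by positivity) hslx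
  have hsly : |Real.sin (l * y)| ≤ l * y := by
    calc |Real.sin (l * y)| ≤ |l * y| := Real.abs_sin_le_abs
    _ = l * y := abs_of_pos (by positivity)
  have hsy : |Real.sin y| ≤ y := by
    calc |Real.sin y| ≤ |y| := Real.abs_sin_le_abs
    _ = y := abs_of_pos hy
  have hcy : |Real.cos y| ≤ 1 := Real.abs_cos_le_one y
  have hcabs : |κ ^ 2 - x ^ 2 - y ^ 2| ≤ κ ^ 2 + x ^ 2 + y ^ 2 := by
    rw [abs_le]; constructor <;> nlinarith
  -- bound term2
  have hT2 : |(κ ^ 2 - x ^ 2 - y ^ 2) * Real.sin y - 2 * κ * x * Real.cos y| * |Real.sin (l * y)|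
      ≤ ((κ ^ 2 + x ^ 2 + y ^ 2) * y + 2 * κ * x) * (l * y) := by
    have h3 : |(κ ^ 2 - x ^ 2 - y ^ 2) * Real.sin y - 2 * κ * x * Real.cos y|
        ≤ (κ ^ 2 + x ^ 2 + y ^ 2) * y + 2 * κ * x := by
      calc |(κ ^ 2 - x ^ 2 - y ^ 2) * Real.sin y - 2 * κ * x * Real.cos y|
          ≤ |(κ ^ 2 - x ^ 2 - y ^ 2) * Real.sin y| + |2 * κ * x * Real.cos y| :=
            abs_sub _ _
        _ = |κ ^ 2 - x ^ 2 - y ^ 2| * |Real.sin y| + (2 * κ * x) * |Real.cos y| := by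
            rw [abs_mul, abs_mul, abs_of_pos (show (0:ℝ) < 2 * κ * x by positivity)]
        _ ≤ (κ ^ 2 + x ^ 2 + y ^ 2) * y + (2 * κ * x) * 1 :=
            add_le_add (mul_le_mul hcabs hsy (abs_nonneg _) hA.le)
              (mul_le_mul_of_nonneg_left hcy (by positivity))
        _ = (κ ^ 2 + x ^ 2 + y ^ 2) * y + 2 * κ * x := by ring
    exact mul_le_mul h3 hsly (abs_nonneg _) (by positivity)
  have hT1 : ((κ ^ 2 + x ^ 2 + y ^ 2) * x + 2 * κ * y) * (l * x)
      < ((κ ^ 2 + x ^ 2 + y ^ 2) * Real.sinh x + 2 * κ * y * Real.cosh x) * Real.sinh (l * x) := by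
    have h4 : (κ ^ 2 + x ^ 2 + y ^ 2) * x + 2 * κ * y
        < (κ ^ 2 + x ^ 2 + y ^ 2) * Real.sinh x + 2 * κ * y * Real.cosh x := by
      have h5 := mul_lt_mul_of_pos_left hsx hA
      have h6 := mul_lt_mul_of_pos_left hcx (show (0:ℝ) < 2 * κ * y by positivity)
      linarith
    exact mul_lt_mul h4 hslx.le (by positivity) (by positivity)
  have key : ((κ ^ 2 + x ^ 2 + y ^ 2) * x + 2 * κ * y) * (l * x)
      - ((κ ^ 2 + x ^ 2 + y ^ 2) * y + 2 * κ * x) * (l * y)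
      = l * (κ ^ 2 + x ^ 2 + y ^ 2) * (t ^ 2 - κ ^ 2) := by
    rw [← h1]; ring
  have ht2 : 0 < t ^ 2 - κ ^ 2 := by nlinarith
  constructor
  · linarith
  · exact mul_pos (mul_pos hl hA) ht2
end

section
/- Let a, b ∈ ℂ and θ ∈ ℝ, and let λ = a cos θ + w where w is either complex square root of b² − a² sin² θ. Then λ · (a cos θ − w) = a² − b², so the product of the two values λ_±(θ) is independent of θ; moreover if |a+b| ≤ 1 and |a−b| ≤ 1 then |λ_±(θ)| ≤ 1 for all θ. -/
private lemma key_ineq (a b x y : ℂ) (s c : ℝ) (hcs : s^2 + c^2 = 1)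
    (h1 : ‖a + b‖ ≤ 1) (h2 : ‖a - b‖ ≤ 1) :
    Complex.normSq (a * (c:ℂ) * x + (b - a * (s:ℂ)) * y) +
      Complex.normSq ((b + a * (s:ℂ)) * x + a * (c:ℂ) * y)
      ≤ Complex.normSq x + Complex.normSq y := by
  have hid : Complex.normSq (a * (c:ℂ) * x + (b - a * (s:ℂ)) * y) +
      Complex.normSq ((b + a * (s:ℂ)) * x + a * (c:ℂ) * y)
      = (Complex.normSq a + Complex.normSq b) * (Complex.normSq x + Complex.normSq y)
        + 2 * (a * (starRingEnd ℂ) b).re *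
          (s * (Complex.normSq x - Complex.normSq y) + 2 * c * (x * (starRingEnd ℂ) y).re) := by
    simp only [Complex.normSq_apply, Complex.add_re, Complex.add_im, Complex.mul_re,
      Complex.mul_im, Complex.sub_re, Complex.sub_im, Complex.ofReal_re, Complex.ofReal_im,
      Complex.conj_re, Complex.conj_im]
    linear_combination (a.re^2 + a.im^2) * (x.re^2 + x.im^2 + y.re^2 + y.im^2) * hcs
  set r : ℝ := (a * (starRingEnd ℂ) b).re with hrdef
  set R : ℝ := (x * (starRingEnd ℂ) y).re with hRdef
  -- bound on |R|
  have hR2 : R ^ 2 ≤ Complex.normSq x * Complex.normSq y := by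
    have := Complex.abs_re_le_norm (x * (starRingEnd ℂ) y)
    have h3 : ‖x * (starRingEnd ℂ) y‖ ^ 2 = Complex.normSq x * Complex.normSq y := by
      rw [← Complex.sq_norm x, ← Complex.sq_norm y]
      simp [norm_mul, Complex.norm_conj]
      ring
    have h4 : |(x * (starRingEnd ℂ) y).re| * |(x * (starRingEnd ℂ) y).re|
        ≤ ‖x * (starRingEnd ℂ) y‖ * ‖x * (starRingEnd ℂ) y‖ :=
      mul_self_le_mul_self (abs_nonneg _) this
    nlinarith [h4, h3, abs_mul_abs_self (x * (starRingEnd ℂ) y).re]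
  -- |Q| ≤ N
  have hQ : |s * (Complex.normSq x - Complex.normSq y) + 2 * c * R|
      ≤ Complex.normSq x + Complex.normSq y := by
    rw [abs_le]
    constructor <;>
      nlinarith [sq_nonneg (s * (2 * R) - c * (Complex.normSq x - Complex.normSq y)),
        sq_nonneg (s * (2 * R) + c * (Complex.normSq x - Complex.normSq y)),
        sq_nonneg (Complex.normSq x - Complex.normSq y), hR2, Complex.normSq_nonneg x,
        Complex.normSq_nonneg y,
        sq_nonneg (s * (Complex.normSq x - Complex.normSq y) + 2 * c * R + (Complex.normSq x + Complex.normSq y)),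
        sq_nonneg (s * (Complex.normSq x - Complex.normSq y) + 2 * c * R - (Complex.normSq x + Complex.normSq y))]
  -- normSq (a±b) bounds
  have hpb : Complex.normSq a + Complex.normSq b + 2 * r ≤ 1 := by
    have : Complex.normSq (a + b) ≤ 1 := by
      rw [← Complex.sq_norm]; nlinarith [norm_nonneg (a + b)]
    have he : Complex.normSq (a + b) = Complex.normSq a + Complex.normSq b + 2 * r := by
      simp only [hrdef, Complex.normSq_apply, Complex.add_re, Complex.add_im, Complex.mul_re,
        Complex.conj_re, Complex.conj_im]
      ring
    linarith [he ▸ this]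
  have hmb : Complex.normSq a + Complex.normSq b - 2 * r ≤ 1 := by
    have : Complex.normSq (a - b) ≤ 1 := by
      rw [← Complex.sq_norm]; nlinarith [norm_nonneg (a - b)]
    have he : Complex.normSq (a - b) = Complex.normSq a + Complex.normSq b - 2 * r := by
      simp only [hrdef, Complex.normSq_apply, Complex.sub_re, Complex.sub_im, Complex.mul_re,
        Complex.conj_re, Complex.conj_im]
      ring
    linarith [he ▸ this]
  rw [hid]
  have hab : Complex.normSq a + Complex.normSq b + 2 * |r| ≤ 1 := by
    rcases abs_cases r with ⟨h, _⟩ | ⟨h, _⟩ <;> rw [h] <;> linarith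
  have hN : 0 ≤ Complex.normSq x + Complex.normSq y :=
    add_nonneg (Complex.normSq_nonneg x) (Complex.normSq_nonneg y)
  have habs : 2 * r * (s * (Complex.normSq x - Complex.normSq y) + 2 * c * R)
      ≤ 2 * |r| * (Complex.normSq x + Complex.normSq y) := by
    calc 2 * r * (s * (Complex.normSq x - Complex.normSq y) + 2 * c * R)
        ≤ |2 * r * (s * (Complex.normSq x - Complex.normSq y) + 2 * c * R)| := le_abs_self _
      _ = 2 * |r| * |s * (Complex.normSq x - Complex.normSq y) + 2 * c * R| := by
          rw [abs_mul, abs_mul]; simp [abs_of_nonneg]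
      _ ≤ 2 * |r| * (Complex.normSq x + Complex.normSq y) := by
          apply mul_le_mul_of_nonneg_left hQ; positivity
  nlinarith [hab, hN, habs, abs_nonneg r]

private lemma half_bound (a b w : ℂ) (s c : ℝ) (hcs : s^2 + c^2 = 1)
    (hw : w ^ 2 = b ^ 2 - a ^ 2 * (s:ℂ) ^ 2)
    (h1 : ‖a + b‖ ≤ 1) (h2 : ‖a - b‖ ≤ 1) :
    ‖a * (c:ℂ) + w‖ ≤ 1 := by
  have e1 : a * (c:ℂ) * (b - a * (s:ℂ)) + (b - a * (s:ℂ)) * w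
      = (a * (c:ℂ) + w) * (b - a * (s:ℂ)) := by ring
  have e2 : (b + a * (s:ℂ)) * (b - a * (s:ℂ)) + a * (c:ℂ) * w
      = (a * (c:ℂ) + w) * w := by linear_combination -hw
  have key := key_ineq a b (b - a * (s:ℂ)) w s c hcs h1 h2
  set x : ℂ := b - a * (s:ℂ) with hx
  set y : ℂ := w with hy
  set l : ℂ := a * (c:ℂ) + w with hl
  rw [e1, e2, Complex.normSq_mul, Complex.normSq_mul] at key
  by_cases hN : Complex.normSq x + Complex.normSq y = 0
  · -- x = 0 and y = 0, so w = 0 and l = a * c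
    have hx0 : Complex.normSq y = 0 := by
      have := Complex.normSq_nonneg x
      have := Complex.normSq_nonneg y
      linarith
    have hw0 : w = 0 := by
      rw [hy] at hx0; exact Complex.normSq_eq_zero.mp hx0
    rw [hl, hw0, add_zero, norm_mul]
    have hA : ‖a‖ ≤ 1 := by
      have : a = ((a + b) + (a - b)) / 2 := by ring
      rw [this]
      calc ‖((a + b) + (a - b)) / 2‖
          ≤ (‖a + b‖ + ‖a - b‖) / 2 := by
            rw [norm_div]
            simp only [Complex.norm_ofNat]
            gcongr
            exact norm_add_le _ _
        _ ≤ 1 := by linarith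
    have hc : ‖(c:ℂ)‖ ≤ 1 := by
      rw [Complex.norm_real, Real.norm_eq_abs]
      nlinarith [sq_nonneg s, abs_nonneg c, sq_abs c]
    calc ‖a‖ * ‖(c:ℂ)‖ ≤ 1 * 1 := by
          apply mul_le_mul hA hc (norm_nonneg _) zero_le_one
      _ = 1 := by ring
  · have hNpos : 0 < Complex.normSq x + Complex.normSq y := by
      rcases lt_or_eq_of_le (add_nonneg (Complex.normSq_nonneg x) (Complex.normSq_nonneg y)) with h | h
      · exact h
      · exact absurd h.symm hN
    have hl2 : Complex.normSq l ≤ 1 := by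
      by_contra h
      push_neg at h
      nlinarith
    rw [← Complex.sq_norm] at hl2
    nlinarith [norm_nonneg l]

theorem stmt_19 (a b : ℂ) (θ : ℝ) (w : ℂ)
    (hw : w ^ 2 = b ^ 2 - a ^ 2 * (Real.sin θ : ℂ) ^ 2) :
    (a * (Real.cos θ : ℂ) + w) * (a * (Real.cos θ : ℂ) - w) = a ^ 2 - b ^ 2 ∧
    (‖a + b‖ ≤ 1 → ‖a - b‖ ≤ 1 →
      ‖a * (Real.cos θ : ℂ) + w‖ ≤ 1 ∧
      ‖a * (Real.cos θ : ℂ) - w‖ ≤ 1) := by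
  have hcs : Real.sin θ ^ 2 + Real.cos θ ^ 2 = 1 := Real.sin_sq_add_cos_sq θ
  have hcsC : (Real.sin θ : ℂ) ^ 2 + (Real.cos θ : ℂ) ^ 2 = 1 := by
    exact_mod_cast congrArg (Complex.ofReal) hcs
  constructor
  · linear_combination -hw + a ^ 2 * hcsC
  · intro h1 h2
    constructor
    · exact half_bound a b w _ _ hcs hw h1 h2
    · have hw' : (-w) ^ 2 = b ^ 2 - a ^ 2 * ((Real.sin θ : ℝ) : ℂ) ^ 2 := by
        rw [neg_pow]; simpa using hw
      have := half_bound a b (-w) _ _ hcs hw' h1 h2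
      simpa [sub_eq_add_neg] using this
end
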